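/- Let F be a subfield of ℂ with π² ∉ F. Then there exist an entire function f : ℂ → ℂ and a quadratic polynomial q(z) = a₂z² + a₁z + a₀ with complex coefficients such that: (1) some Taylor coefficient of f at 0 does not lie in F, and some coefficient of q does not lie in F; (2) a₀ and a₂ both lie in F; and (3) every Taylor coefficient of the composition f ∘ q at 0 lies in F. -/

import Mathlib

noncomputable def gg : ℂ → ℂ := fun v => Complex.cos (v ^ (1/2 : ℂ))

lemma sq_half (v : ℂ) : (v ^ (1/2 : ℂ)) ^ 2 = v := by
  have h := Complex.cpow_nat_mul v 2 (1/2)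
  rw [show ((2:ℕ):ℂ) * (1/2:ℂ) = 1 by norm_num, Complex.cpow_one] at h
  exact h.symm

lemma gg_sq (u : ℂ) : gg (u ^ 2) = Complex.cos u := by
  have hs : ((u ^ 2) ^ (1/2:ℂ)) ^ 2 = u ^ 2 := sq_half _
  rcases sq_eq_sq_iff_eq_or_eq_neg.mp hs with h | h
  · rw [gg, h]
  · rw [gg, h, Complex.cos_neg]

lemma gg_alt (v : ℂ) : gg v = Complex.cos (Complex.I * ((-v) ^ (1/2:ℂ))) := by
  have hs : (v ^ (1/2:ℂ)) ^ 2 = (Complex.I * ((-v) ^ (1/2:ℂ))) ^ 2 := by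
    rw [mul_pow, Complex.I_sq, sq_half, sq_half]; ring
  rcases sq_eq_sq_iff_eq_or_eq_neg.mp hs with h | h
  · rw [gg, h]
  · rw [gg, h, Complex.cos_neg]

lemma gg_diffAt_ne {v : ℂ} (hv : v ≠ 0) : DifferentiableAt ℂ gg v := by
  by_cases h : v ∈ Complex.slitPlane
  · exact Complex.differentiable_cos.differentiableAt.comp v
      (differentiableAt_id.cpow (differentiableAt_const _) h)
  · have h2 : -v ∈ Complex.slitPlane := by
      rw [Complex.mem_slitPlane_iff] at h ⊢
      push_neg at h
      rcases h with ⟨h1, h2⟩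
      simp only [Complex.neg_re, Complex.neg_im, neg_ne_zero]
      rcases lt_or_eq_of_le h1 with h1 | h1
      · left; linarith
      · exfalso; exact hv (Complex.ext (by simpa using h1) (by simpa using h2))
    have he : gg = fun v => Complex.cos (Complex.I * ((-v) ^ (1/2:ℂ))) := funext gg_alt
    rw [he]
    exact Complex.differentiable_cos.differentiableAt.comp v
      ((differentiableAt_const _).mul
        ((differentiableAt_id.neg).cpow (differentiableAt_const _) h2))

lemma gg_diff : Differentiable ℂ gg := by
  intro v
  rcases eq_or_ne v 0 with rfl | hv
  · have hc : ContinuousAt gg 0 := by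
      refine Complex.continuous_cos.continuousAt.comp ?_
      have hpair : ContinuousAt (fun x : ℂ => (x, (1/2:ℂ))) 0 :=
        continuousAt_id.prodMk continuousAt_const
      exact ContinuousAt.comp (f := fun x : ℂ => (x, (1/2:ℂ))) (x := 0)
        (Complex.continuousAt_cpow_zero_of_re_pos (by norm_num)) hpair
    have hd : ∀ᶠ z in nhdsWithin 0 {(0:ℂ)}ᶜ, DifferentiableAt ℂ gg z :=
      Filter.eventually_of_mem self_mem_nhdsWithin fun z hz => gg_diffAt_ne hz
    exact (Complex.analyticAt_of_differentiable_on_punctured_nhds_of_continuousAt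
      hd hc).differentiableAt
  · exact gg_diffAt_ne hv

theorem stmt14 (F : Subfield ℂ) (hπ : ((Real.pi : ℂ)) ^ 2 ∉ F) :
    ∃ (f : ℂ → ℂ) (a₂ a₁ a₀ : ℂ),
      Differentiable ℂ f ∧ a₂ ≠ 0 ∧
      (∃ k : ℕ, iteratedDeriv k f 0 / (Nat.factorial k : ℂ) ∉ F) ∧
      (a₂ ∉ F ∨ a₁ ∉ F ∨ a₀ ∉ F) ∧
      a₀ ∈ F ∧ a₂ ∈ F ∧
      (∀ k : ℕ,
        iteratedDeriv k (fun z => f (a₂ * z ^ 2 + a₁ * z + a₀)) 0 /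
          (Nat.factorial k : ℂ) ∈ F) := by
  set p : ℂ := (Real.pi : ℂ) with hp
  have hp0 : p ≠ 0 := by
    simp [hp, Complex.ofReal_ne_zero, Real.pi_ne_zero]
  have hcosp : Complex.cos p = -1 := by
    rw [hp, ← Complex.ofReal_cos, Real.cos_pi]; norm_num
  have hsinp : Complex.sin p = 0 := by
    rw [hp, ← Complex.ofReal_sin, Real.sin_pi]; norm_num
  refine ⟨fun w => gg (w + p ^ 2), 1, 2 * p, 0, ?_, one_ne_zero, ?_, ?_, zero_mem F,
    one_mem F, ?_⟩
  · exact gg_diff.comp (differentiable_id.add_const _)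
  · -- second Taylor coefficient of f is 1/(8π²) ∉ F
    refine ⟨2, ?_⟩
    have hsq : Differentiable ℂ (fun u : ℂ => u ^ 2) := differentiable_pow 2
    have h1 : ∀ u : ℂ, deriv gg (u ^ 2) * (2 * u) = -Complex.sin u := by
      intro u
      have e : (fun u : ℂ => gg (u ^ 2)) = Complex.cos := funext gg_sq
      have hd : deriv (fun u : ℂ => gg (u ^ 2)) u = deriv gg (u ^ 2) * (2 * u) := by
        rw [show (fun u : ℂ => gg (u ^ 2)) = gg ∘ (fun u : ℂ => u ^ 2) from rfl,
          deriv_comp u gg_diff.differentiableAt hsq.differentiableAt]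
        simp [deriv_pow]; try ring
      rw [← hd, e, Complex.deriv_cos]
    have hgp1 : deriv gg (p ^ 2) = 0 := by
      have h := h1 p
      rw [hsinp, neg_zero, mul_eq_zero] at h
      rcases h with h | h
      · exact h
      · exact absurd h (by simpa using hp0)
    have hganal : AnalyticOnNhd ℂ gg Set.univ := fun z _ => gg_diff.analyticAt z
    have hg'_diff : Differentiable ℂ (deriv gg) := fun z =>
      ((hganal.deriv) z (Set.mem_univ z)).differentiableAt
    have h2 : deriv (deriv gg) (p ^ 2) = 1 / (4 * p ^ 2) := by
      have e2 : (fun u : ℂ => deriv gg (u ^ 2) * (2 * u)) =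
          (fun u : ℂ => -Complex.sin u) := funext h1
      have hA : DifferentiableAt ℂ (fun u : ℂ => deriv gg (u ^ 2)) p :=
        (hg'_diff.comp hsq).differentiableAt
      have hB : DifferentiableAt ℂ (fun u : ℂ => 2 * u) p := by fun_prop
      have hd : deriv (fun u : ℂ => deriv gg (u ^ 2) * (2 * u)) p
          = (deriv (deriv gg) (p ^ 2) * (2 * p)) * (2 * p) + deriv gg (p ^ 2) * 2 := by
        rw [deriv_fun_mul hA hB]
        have hch : deriv (fun u : ℂ => deriv gg (u ^ 2)) p
            = deriv (deriv gg) (p ^ 2) * (2 * p) := by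
          rw [show (fun u : ℂ => deriv gg (u ^ 2)) = (deriv gg) ∘ (fun u : ℂ => u ^ 2)
            from rfl, deriv_comp p hg'_diff.differentiableAt hsq.differentiableAt]
          simp [deriv_pow]; try ring
        have hB' : deriv (fun u : ℂ => 2 * u) p = 2 := by
          have := ((hasDerivAt_id p).const_mul (2:ℂ)).deriv
          simpa using this
        rw [hch, hB']
      have hd2 : deriv (fun u : ℂ => -Complex.sin u) p = 1 := by
        rw [deriv.fun_neg]
        have : deriv Complex.sin p = Complex.cos p := by
          rw [Complex.deriv_sin]
        rw [this, hcosp]; norm_num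
      rw [e2, hd2, hgp1] at hd
      have h4 : (4 : ℂ) * p ^ 2 ≠ 0 := by
        simp [pow_eq_zero_iff, hp0]
      field_simp
      linear_combination (-1 : ℂ) * hd
    have hf1 : deriv (fun w : ℂ => gg (w + p ^ 2)) = fun w => deriv gg (w + p ^ 2) :=
      funext fun w => deriv_comp_add_const gg (p ^ 2) w
    have hit : iteratedDeriv 2 (fun w : ℂ => gg (w + p ^ 2)) 0
        = deriv (deriv gg) (p ^ 2) := by
      rw [show (2:ℕ) = 1 + 1 from rfl, iteratedDeriv_succ, iteratedDeriv_one, hf1,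
        deriv_comp_add_const, zero_add]
    rw [hit, h2]
    intro hmem
    have hval : (1 / (4 * p ^ 2)) / ((Nat.factorial 2 : ℕ) : ℂ) = (8 * p ^ 2)⁻¹ := by
      norm_num [Nat.factorial]
      ring
    rw [hval] at hmem
    have h8p : (8 * p ^ 2 : ℂ) ∈ F := by
      have := inv_mem hmem
      rwa [inv_inv] at this
    have h8 : ((8:ℕ):ℂ) ∈ F := natCast_mem F 8
    have hfin : (p ^ 2 : ℂ) ∈ F := by
      have hm := mul_mem (inv_mem h8) h8p
      rwa [show ((8:ℕ):ℂ) = (8:ℂ) by norm_num,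
        inv_mul_cancel_left₀ (by norm_num : (8:ℂ) ≠ 0)] at hm
    exact hπ hfin
  · -- a₁ = 2π ∉ F
    refine Or.inr (Or.inl ?_)
    intro hmem
    have h2 : ((2:ℕ):ℂ) ∈ F := natCast_mem F 2
    have hpF : p ∈ F := by
      have hm := mul_mem (inv_mem h2) hmem
      rwa [show ((2:ℕ):ℂ) = (2:ℂ) by norm_num,
        inv_mul_cancel_left₀ (by norm_num : (2:ℂ) ≠ 0)] at hm
    exact hπ (by rw [sq]; exact mul_mem hpF hpF)
  · -- all Taylor coefficients of the composition lie in F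
    intro k
    have hcomp : (fun z : ℂ => (fun w : ℂ => gg (w + p ^ 2)) (1 * z ^ 2 + 2 * p * z + 0))
        = fun z : ℂ => -Complex.cos z := by
      funext z
      show gg (1 * z ^ 2 + 2 * p * z + 0 + p ^ 2) = -Complex.cos z
      rw [show 1 * z ^ 2 + 2 * p * z + 0 + p ^ 2 = (z + p) ^ 2 by ring, gg_sq,
        Complex.cos_add, hcosp, hsinp]
      ring
    rw [hcomp]
    have cyc : ∀ n : ℕ,
        iteratedDeriv n (fun z : ℂ => -Complex.cos z) = (fun z : ℂ => -Complex.cos z)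
        ∨ iteratedDeriv n (fun z : ℂ => -Complex.cos z) = Complex.sin
        ∨ iteratedDeriv n (fun z : ℂ => -Complex.cos z) = Complex.cos
        ∨ iteratedDeriv n (fun z : ℂ => -Complex.cos z) = (fun z : ℂ => -Complex.sin z) := by
      intro n
      induction n with
      | zero => left; simp [iteratedDeriv_zero]
      | succ m ih =>
        rw [iteratedDeriv_succ]
        rcases ih with h | h | h | h <;> rw [h]
        · right; left
          funext z; rw [deriv.fun_neg, Complex.deriv_cos]; ring
        · right; right; left
          exact Complex.deriv_sin
        · right; right; right
          exact Complex.deriv_cos'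
        · left
          funext z
          rw [deriv.fun_neg]
          have : deriv Complex.sin z = Complex.cos z := by rw [Complex.deriv_sin]
          rw [this]
    have hk : ((Nat.factorial k : ℕ) : ℂ) ∈ F := natCast_mem F _
    rcases cyc k with h | h | h | h <;> rw [h] <;>
      simp only [Complex.cos_zero, Complex.sin_zero, neg_zero, zero_div] <;>
      first
        | exact zero_mem F
        | exact div_mem (neg_mem (one_mem F)) hk
        | exact div_mem (one_mem F) hk
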